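/- Let S be a 2n×2n symplectic matrix with eigenvectors x₁, x₂ for eigenvalues λ₁ and λ₁⁻¹ respectively, normalized so that XᵀJX = J₂ for X = [x₁ x₂]. Then the matrix Ŝ = S + XRXᵀJᵀS is symplectic if and only if the entries of R = [r_{ij}] ∈ M₂(ℂ) satisfy r₁₂ − r₂₁ + r₁₁r₂₂ − r₁₂r₂₁ = 0. -/

import Mathlib

open Matrix

private lemma aux_cancel_left {α : Type*} [CommRing α] {m k : Type*} [Fintype m] [Fintype k]
    [DecidableEq m] (A B : Matrix m m α) (X : Matrix m k α) (hAB : A * B = 1)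
    (h : B * X = 0) : X = 0 := by
  calc X = A * B * X := by rw [hAB, Matrix.one_mul]
    _ = A * (B * X) := Matrix.mul_assoc _ _ _
    _ = 0 := by rw [h, Matrix.mul_zero]

private lemma aux_cancel_right {α : Type*} [CommRing α] {m k : Type*} [Fintype m] [Fintype k]
    [DecidableEq m] (A B : Matrix m m α) (X : Matrix k m α) (hBA : B * A = 1)
    (h : X * B = 0) : X = 0 := by
  calc X = X * (B * A) := by rw [hBA, Matrix.mul_one]
    _ = X * B * A := (Matrix.mul_assoc _ _ _).symm
    _ = 0 := by rw [h, Matrix.zero_mul]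

private lemma aux_M_form (a b c d : ℂ) :
    (!![a, b; c, d])ᵀ - !![a, b; c, d] - (!![a, b; c, d])ᵀ * !![0, 1; -1, 0] * !![a, b; c, d]
      = !![0, -(b - c + a * d - b * c); b - c + a * d - b * c, 0] := by
  have ht : (!![a, b; c, d])ᵀ = !![a, c; b, d] := (Matrix.transposeᵣ_eq _).symm
  rw [ht]
  ext i j
  fin_cases i <;> fin_cases j <;>
    simp [Matrix.mul_apply, Fin.sum_univ_two] <;> ring

set_option maxHeartbeats 1000000 in
theorem symplectic_update_iff (n : ℕ)
    (J : Matrix (Fin n ⊕ Fin n) (Fin n ⊕ Fin n) ℂ)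
    (hJ : J = Matrix.fromBlocks 0 1 (-1) 0)
    (S : Matrix (Fin n ⊕ Fin n) (Fin n ⊕ Fin n) ℂ)
    (hS : Sᵀ * J * S = J)
    (lam1 : ℂ) (x1 x2 : Fin n ⊕ Fin n → ℂ)
    (h1 : S.mulVec x1 = lam1 • x1) (h2 : S.mulVec x2 = lam1⁻¹ • x2)
    (Xm : Matrix (Fin n ⊕ Fin n) (Fin 2) ℂ)
    (hXm : Xm = Matrix.of fun i j => if j = 0 then x1 i else x2 i)
    (hnorm : Xmᵀ * J * Xm = !![0, 1; -1, 0])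
    (R : Matrix (Fin 2) (Fin 2) ℂ) :
    ((S + Xm * R * Xmᵀ * Jᵀ * S)ᵀ * J * (S + Xm * R * Xmᵀ * Jᵀ * S) = J) ↔
      R 0 1 - R 1 0 + R 0 0 * R 1 1 - R 0 1 * R 1 0 = 0 := by
  set J₂ : Matrix (Fin 2) (Fin 2) ℂ := !![0, 1; -1, 0] with hJ₂
  set M : Matrix (Fin 2) (Fin 2) ℂ := Rᵀ - R - Rᵀ * J₂ * R with hM
  have hJt : Jᵀ = -J := by
    subst hJ; rw [Matrix.fromBlocks_transpose, Matrix.fromBlocks_neg]; simp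
  have hJJ : J * J = -1 := by
    subst hJ
    rw [Matrix.fromBlocks_multiply, ← Matrix.fromBlocks_one, Matrix.fromBlocks_neg]
    simp
  have hJ₂J₂ : J₂ * J₂ = -1 := by
    rw [hJ₂]; ext i j; fin_cases i <;> fin_cases j <;>
      simp [Matrix.mul_apply, Fin.sum_univ_two]
  have hnJJ : (-J) * J = 1 := by rw [Matrix.neg_mul, hJJ, neg_neg]
  have hJnJ : J * (-J) = 1 := by rw [Matrix.mul_neg, hJJ, neg_neg]
  -- the canonical form of M
  have hMform : M = !![0, -(R 0 1 - R 1 0 + R 0 0 * R 1 1 - R 0 1 * R 1 0);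
      R 0 1 - R 1 0 + R 0 0 * R 1 1 - R 0 1 * R 1 0, 0] := by
    rw [hM, hJ₂]
    conv_lhs => rw [Matrix.eta_fin_two R]
    exact aux_M_form (R 0 0) (R 0 1) (R 1 0) (R 1 1)
  -- explicit inverse of S
  set L : Matrix (Fin n ⊕ Fin n) (Fin n ⊕ Fin n) ℂ := -(J * Sᵀ * J) with hL
  have hLS : L * S = 1 := by
    rw [hL]
    calc -(J * Sᵀ * J) * S = -(J * (Sᵀ * J * S)) := by
          simp [Matrix.mul_assoc]
      _ = 1 := by rw [hS, hJJ]; simp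
  have hSL : S * L = 1 := mul_eq_one_comm.mp hLS
  have hLtSt : Lᵀ * Sᵀ = 1 := by
    rw [← Matrix.transpose_mul, hSL, Matrix.transpose_one]
  -- key expansion
  have key : (S + Xm * R * Xmᵀ * Jᵀ * S)ᵀ * J * (S + Xm * R * Xmᵀ * Jᵀ * S)
      = J + Sᵀ * (J * (Xm * (M * (Xmᵀ * (J * S))))) := by
    have hS' : ∀ Y, Sᵀ * (J * (S * Y)) = J * Y := by
      intro Y; rw [← Matrix.mul_assoc, ← Matrix.mul_assoc, hS]
    have hS'' : Sᵀ * (J * S) = J := by rw [← Matrix.mul_assoc, hS]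
    have hnorm' : ∀ Y : Matrix (Fin 2) (Fin n ⊕ Fin n) ℂ, Xmᵀ * (J * (Xm * Y)) = J₂ * Y := by
      intro Y; rw [← Matrix.mul_assoc, ← Matrix.mul_assoc, hnorm]
    rw [hM]
    simp only [transpose_add, transpose_mul, transpose_transpose, hJt, transpose_neg]
    simp only [add_mul, mul_add, sub_mul, mul_sub, Matrix.neg_mul, Matrix.mul_neg,
      Matrix.mul_assoc, neg_neg, hnorm', hS', hS'']
    simp only [Matrix.sub_mul, Matrix.add_mul, Matrix.neg_mul, Matrix.mul_add, Matrix.mul_neg,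
      Matrix.mul_assoc, sub_eq_add_neg, ← add_assoc]
  rw [key, add_eq_left]
  constructor
  · intro h
    have e1 : J * (Xm * (M * (Xmᵀ * (J * S)))) = 0 :=
      aux_cancel_left Lᵀ Sᵀ _ hLtSt h
    have e2 : Xm * (M * (Xmᵀ * (J * S))) = 0 :=
      aux_cancel_left (-J) J _ hnJJ e1
    have e2' : Xm * M * Xmᵀ * J * S = 0 := by
      rw [Matrix.mul_assoc, Matrix.mul_assoc, Matrix.mul_assoc, e2]
    have e3 : Xm * M * Xmᵀ * J = 0 :=
      aux_cancel_right L S _ hSL e2'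
    have e4 : Xm * M * Xmᵀ = 0 :=
      aux_cancel_right (-J) J _ hJnJ e3
    have e4' : ∀ Y : Matrix (Fin n ⊕ Fin n) (Fin 2) ℂ, Xm * (M * (Xmᵀ * Y)) = 0 := by
      intro Y
      rw [← Matrix.mul_assoc, ← Matrix.mul_assoc, e4, Matrix.zero_mul]
    have e5 : J₂ * M * J₂ = 0 := by
      rw [← hnorm]
      simp only [Matrix.mul_assoc]
      simp [e4']
    have h7 : J₂ * (J₂ * M * J₂) * J₂ = M := by
      rw [← Matrix.mul_assoc J₂ (J₂ * M) J₂, ← Matrix.mul_assoc J₂ J₂ M,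
        Matrix.mul_assoc (J₂ * J₂ * M) J₂ J₂, hJ₂J₂]
      simp
    have hM0 : M = 0 := by
      rw [← h7, e5, Matrix.mul_zero, Matrix.zero_mul]
    have e6 := congrFun (congrFun (hMform.symm.trans hM0) 1) 0
    simpa using e6
  · intro h
    have hM0 : M = 0 := by
      rw [hMform, h]
      norm_num
      ext i j
      fin_cases i <;> fin_cases j <;> simp
    rw [hM0]
    simp
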